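/- Let Δ be a cycle and F ≠ G facets of Δ that are not strong neighbors. Then F ∩ G ⊆ H for every facet H ∈ Δ. -/
import Mathlib


variable {V : Type*} [DecidableEq V]

/-- A facet complex: no facet contains another. -/
def IsFacetComplex (Δ : Finset (Finset V)) : Prop :=
  ∀ F ∈ Δ, ∀ G ∈ Δ, F ⊆ G → F = G

/-- `F` is a leaf of `Δ`. -/
def IsLeaf (Δ : Finset (Finset V)) (F : Finset V) : Prop :=
  F ∈ Δ ∧ (Δ = {F} ∨ ∃ G ∈ Δ.erase F, ∀ H ∈ Δ.erase F, H ∩ F ⊆ G ∩ F)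

/-- `Δ` is a forest: every nonempty subset has a leaf. -/
def IsForest (Δ : Finset (Finset V)) : Prop :=
  ∀ Γ ⊆ Δ, Γ.Nonempty → ∃ F, IsLeaf Γ F

/-- `Δ` is connected: any two facets are joined by a path of consecutively
intersecting facets. -/
def FCConnected (Δ : Finset (Finset V)) : Prop :=
  ∀ F ∈ Δ, ∀ G ∈ Δ,
    Relation.ReflTransGen (fun A B => A ∈ Δ ∧ B ∈ Δ ∧ (A ∩ B).Nonempty) F G

/-- A (simplicial) tree is a connected forest. -/
def IsTree (Δ : Finset (Finset V)) : Prop := FCConnected Δ ∧ IsForest Δ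

/-- A cycle: a nonempty facet complex with no leaf, every nonempty proper
subset of which has a leaf. -/
def IsCycle (Δ : Finset (Finset V)) : Prop :=
  Δ.Nonempty ∧ (¬ ∃ F, IsLeaf Δ F) ∧ ∀ Γ ⊂ Δ, Γ.Nonempty → ∃ F, IsLeaf Γ F

/-- Strong neighbors in `Δ`. -/
def StrongNeighbor (Δ : Finset (Finset V)) (F G : Finset V) : Prop :=
  F ∈ Δ ∧ G ∈ Δ ∧ F ≠ G ∧ ∀ H ∈ Δ, F ∩ G ⊆ H → H = F ∨ H = G

set_option linter.unusedSectionVars false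
set_option linter.unusedVariables false

lemma isLeaf_of_joint {Γ : Finset (Finset V)} {L K : Finset V} (hL : L ∈ Γ)
    (hK : K ∈ Γ.erase L) (hcov : ∀ H ∈ Γ.erase L, H ∩ L ⊆ K ∩ L) : IsLeaf Γ L :=
  ⟨hL, Or.inr ⟨K, hK, hcov⟩⟩

lemma exists_joint {Γ : Finset (Finset V)} {L : Finset V} (h : IsLeaf Γ L) (h2 : 2 ≤ Γ.card) :
    ∃ K ∈ Γ.erase L, ∀ H ∈ Γ.erase L, H ∩ L ⊆ K ∩ L := by
  rcases h.2 with h1 | h1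
  · exfalso; rw [h1] at h2; simp at h2
  · exact h1

lemma ssubset_of_missing {s t : Finset (Finset V)} (hsub : s ⊆ t) {x : Finset V}
    (hx : x ∈ t) (hxs : x ∉ s) : s ⊂ t := by
  rw [Finset.ssubset_def]; exact ⟨hsub, fun h => hxs (h hx)⟩

lemma ssubset_of_card_lt {s t : Finset (Finset V)} (hsub : s ⊆ t) (h : s.card < t.card) :
    s ⊂ t := by
  rw [Finset.ssubset_def]
  exact ⟨hsub, fun hts => absurd (Finset.card_le_card hts) (by omega)⟩

lemma pair_isLeaf {a b : Finset V} (hab : a ≠ b) : IsLeaf ({a, b} : Finset (Finset V)) a := by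
  refine isLeaf_of_joint (K := b) (by simp) ?_ ?_
  · simp [Finset.mem_erase, hab.symm]
  · intro H hH
    rw [Finset.mem_erase] at hH
    rcases Finset.mem_insert.mp hH.2 with h | h
    · exact absurd h hH.1
    · rw [Finset.mem_singleton] at h; subst h; exact subset_rfl

/-- every proper subset (of a cycle) with at least two facets has two distinct leaves -/
lemma two_leaves {Δ : Finset (Finset V)}
    (hmin : ∀ Γ ⊂ Δ, Γ.Nonempty → ∃ F, IsLeaf Γ F) :
    ∀ (n : ℕ) (Ψ : Finset (Finset V)), Ψ.card = n → Ψ ⊂ Δ → 2 ≤ n →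
      ∃ L₁ ∈ Ψ, ∃ L₂ ∈ Ψ, L₁ ≠ L₂ ∧ IsLeaf Ψ L₁ ∧ IsLeaf Ψ L₂ := by
  intro n
  induction n using Nat.strong_induction_on with
  | _ n IH =>
    intro Ψ hcard hΨ h2
    by_cases hn2 : n = 2
    · subst hn2
      obtain ⟨a, b, hab, rfl⟩ := Finset.card_eq_two.mp hcard
      exact ⟨a, by simp, b, by simp, hab, pair_isLeaf hab, by
        rw [Finset.pair_comm]; exact pair_isLeaf hab.symm⟩
    · have h3 : 3 ≤ n := by omega
      obtain ⟨L₁, hL₁⟩ := hmin Ψ hΨ (Finset.card_pos.mp (by omega))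
      obtain ⟨K, hK, hKcov⟩ := exists_joint hL₁ (by omega)
      set Ψ' := Ψ.erase L₁ with hΨ'def
      have hc' : Ψ'.card = n - 1 := by
        rw [hΨ'def, Finset.card_erase_of_mem hL₁.1, hcard]
      have hΨ'Δ : Ψ' ⊂ Δ := lt_of_le_of_lt (Finset.erase_subset _ _ : Ψ' ⊆ Ψ) hΨ
      obtain ⟨M₁, hM₁Ψ', M₂, hM₂Ψ', hMne, hM₁, hM₂⟩ :=
        IH (n-1) (by omega) Ψ' hc' hΨ'Δ (by omega)
      have hpick : ∃ M ∈ Ψ', M ≠ K ∧ IsLeaf Ψ' M := by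
        by_cases hM₁K : M₁ = K
        · exact ⟨M₂, hM₂Ψ', by rw [← hM₁K]; exact hMne.symm, hM₂⟩
        · exact ⟨M₁, hM₁Ψ', hM₁K, hM₁⟩
      obtain ⟨M, hMΨ', hMK, hMleaf⟩ := hpick
      obtain ⟨K', hK', hK'cov⟩ := exists_joint hMleaf (by omega)
      have hMΨ : M ∈ Ψ := Finset.mem_of_mem_erase hMΨ'
      have hML₁ : M ≠ L₁ := (Finset.mem_erase.mp hMΨ').1
      refine ⟨L₁, hL₁.1, M, hMΨ, hML₁.symm, hL₁, ?_⟩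
      have hK'Ψ : K' ∈ Ψ.erase M := by
        rw [Finset.mem_erase]
        exact ⟨(Finset.mem_erase.mp hK').1, Finset.mem_of_mem_erase
          (Finset.mem_of_mem_erase hK')⟩
      refine isLeaf_of_joint hMΨ hK'Ψ ?_
      intro H hH
      by_cases hHL : H = L₁
      · subst hHL
        have h1 : M ∩ H ⊆ K ∩ H := hKcov M hMΨ'
        have h2 : H ∩ M ⊆ K ∩ M := by
          intro x hx
          rw [Finset.mem_inter] at hx ⊢
          have := h1 (Finset.mem_inter.mpr ⟨hx.2, hx.1⟩)
          rw [Finset.mem_inter] at this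
          exact ⟨this.1, hx.2⟩
        have hKmem : K ∈ Ψ'.erase M := by
          rw [Finset.mem_erase]
          exact ⟨hMK.symm, hK⟩
        exact h2.trans (hK'cov K hKmem)
      · refine hK'cov H ?_
        rw [Finset.mem_erase] at hH ⊢
        exact ⟨hH.1, Finset.mem_erase.mpr ⟨hHL, hH.2⟩⟩

/-- maximum of a family of pairwise comparable traces -/
lemma exists_max_inter {s : Finset (Finset V)} (hne : s.Nonempty) {Hd : Finset V}
    (hcomp : ∀ X ∈ s, ∀ Y ∈ s, X ∩ Hd ⊆ Y ∩ Hd ∨ Y ∩ Hd ⊆ X ∩ Hd) :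
    ∃ M ∈ s, ∀ X ∈ s, X ∩ Hd ⊆ M ∩ Hd := by
  classical
  induction s using Finset.induction_on with
  | empty => exact absurd hne (by simp)
  | @insert a s' ha IH' =>
    rcases s'.eq_empty_or_nonempty with rfl | hne'
    · refine ⟨a, by simp, ?_⟩
      intro X hX
      rcases Finset.mem_insert.mp hX with rfl | h
      · exact subset_rfl
      · simp at h
    · obtain ⟨M, hM, hMmax⟩ := IH' hne' (fun X hX Y hY =>
        hcomp X (Finset.mem_insert_of_mem hX) Y (Finset.mem_insert_of_mem hY))
      rcases hcomp a (Finset.mem_insert_self _ _) M (Finset.mem_insert_of_mem hM) with h | h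
      · refine ⟨M, Finset.mem_insert_of_mem hM, ?_⟩
        intro X hX
        rcases Finset.mem_insert.mp hX with rfl | hX'
        · exact h
        · exact hMmax X hX'
      · refine ⟨a, Finset.mem_insert_self _ _, ?_⟩
        intro X hX
        rcases Finset.mem_insert.mp hX with rfl | hX'
        · exact subset_rfl
        · exact (hMmax X hX').trans h

/-- Leaf analysis of a 3-element proper subset of a cycle: one of six containments holds. -/
lemma triple_cases {Δ : Finset (Finset V)}
    (hmin : ∀ Γ ⊂ Δ, Γ.Nonempty → ∃ F, IsLeaf Γ F) (h4 : 4 ≤ Δ.card)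
    {a b c : Finset V} (ha : a ∈ Δ) (hb : b ∈ Δ) (hc : c ∈ Δ)
    (hab : a ≠ b) (hac : a ≠ c) (hbc : b ≠ c) :
    (c ∩ a ⊆ b ∩ a) ∨ (b ∩ a ⊆ c ∩ a) ∨ (c ∩ b ⊆ a ∩ b) ∨ (a ∩ b ⊆ c ∩ b) ∨
    (b ∩ c ⊆ a ∩ c) ∨ (a ∩ c ⊆ b ∩ c) := by
  have hsub : ({a, b, c} : Finset (Finset V)) ⊆ Δ := by
    intro x hx
    rcases Finset.mem_insert.mp hx with rfl | hx'
    · exact ha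
    rcases Finset.mem_insert.mp hx' with rfl | hx''
    · exact hb
    · rw [Finset.mem_singleton] at hx''; subst hx''; exact hc
  have hcard3 : ({a, b, c} : Finset (Finset V)).card = 3 := by
    rw [Finset.card_insert_of_notMem (by simp [hab, hac]),
        Finset.card_insert_of_notMem (by simp [hbc]), Finset.card_singleton]
  have hss : ({a, b, c} : Finset (Finset V)) ⊂ Δ := ssubset_of_card_lt hsub (by omega)
  obtain ⟨L, hL⟩ := hmin _ hss ⟨a, by simp⟩
  obtain ⟨K, hKmem, hcov⟩ := exists_joint hL (by rw [hcard3]; omega)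
  have hLmem := hL.1
  have hamem : a ∈ ({a, b, c} : Finset (Finset V)) := by simp
  have hbmem : b ∈ ({a, b, c} : Finset (Finset V)) := by simp
  have hcmem : c ∈ ({a, b, c} : Finset (Finset V)) := by simp
  rcases Finset.mem_insert.mp hLmem with rfl | hL'
  · -- L = a
    rw [Finset.mem_erase] at hKmem
    rcases Finset.mem_insert.mp hKmem.2 with rfl | hK'
    · exact absurd rfl hKmem.1
    rcases Finset.mem_insert.mp hK' with rfl | hK''
    · -- K = b
      exact Or.inl (hcov c (Finset.mem_erase.mpr ⟨hac.symm, hcmem⟩))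
    · rw [Finset.mem_singleton] at hK''; subst hK''
      exact Or.inr (Or.inl (hcov b (Finset.mem_erase.mpr ⟨hab.symm, hbmem⟩)))
  rcases Finset.mem_insert.mp hL' with rfl | hL''
  · -- L = b
    rw [Finset.mem_erase] at hKmem
    rcases Finset.mem_insert.mp hKmem.2 with rfl | hK'
    · exact Or.inr (Or.inr (Or.inl (hcov c (Finset.mem_erase.mpr ⟨hbc.symm, hcmem⟩))))
    rcases Finset.mem_insert.mp hK' with rfl | hK''
    · exact absurd rfl hKmem.1
    · rw [Finset.mem_singleton] at hK''; subst hK''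
      exact Or.inr (Or.inr (Or.inr (Or.inl (hcov a (Finset.mem_erase.mpr ⟨hab, hamem⟩)))))
  · rw [Finset.mem_singleton] at hL''; subst hL''
    -- L = c
    rw [Finset.mem_erase] at hKmem
    rcases Finset.mem_insert.mp hKmem.2 with rfl | hK'
    · exact Or.inr (Or.inr (Or.inr (Or.inr (Or.inl
        (hcov b (Finset.mem_erase.mpr ⟨hbc, hbmem⟩))))))
    rcases Finset.mem_insert.mp hK' with rfl | hK''
    · exact Or.inr (Or.inr (Or.inr (Or.inr (Or.inr
        (hcov a (Finset.mem_erase.mpr ⟨hac, hamem⟩))))))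
    · rw [Finset.mem_singleton] at hK''; subst hK''
      exact absurd rfl hKmem.1

lemma nofull {Δ : Finset (Finset V)} (hnoleaf : ¬ ∃ F, IsLeaf Δ F) {L K : Finset V}
    (hL : L ∈ Δ) (hK : K ∈ Δ.erase L) :
    ∃ Z ∈ Δ.erase L, ¬ Z ∩ L ⊆ K ∩ L := by
  by_contra h
  push_neg at h
  exact hnoleaf ⟨L, isLeaf_of_joint hL hK h⟩

lemma union_notMem {Δ : Finset (Finset V)} (hΔ : IsFacetComplex Δ) {X P : Finset V}
    (hX : X ∈ Δ) (hP : P ∈ Δ) (hXP : X ≠ P) : X ∪ P ∉ Δ := by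
  intro h
  have hXeq : X = X ∪ P := hΔ X hX _ h Finset.subset_union_left
  have hPX : P ⊆ X := by rw [hXeq]; exact Finset.subset_union_right
  exact hXP (hΔ P hP X hX hPX).symm

lemma contract_card {Δ : Finset (Finset V)} {X P : Finset V}
    (hX : X ∈ Δ) (hP : P ∈ Δ) (hXP : X ≠ P) (hμ : X ∪ P ∉ Δ) (h2 : 2 ≤ Δ.card) :
    (insert (X ∪ P) ((Δ.erase X).erase P)).card = Δ.card - 1 := by
  have hPX : P ∈ Δ.erase X := Finset.mem_erase.mpr ⟨hXP.symm, hP⟩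
  rw [Finset.card_insert_of_notMem
    (fun h => hμ (Finset.mem_of_mem_erase (Finset.mem_of_mem_erase h))),
    Finset.card_erase_of_mem hPX, Finset.card_erase_of_mem hX]
  omega

lemma strong_comparable {Δ : Finset (Finset V)}
    (hmin : ∀ Γ ⊂ Δ, Γ.Nonempty → ∃ F, IsLeaf Γ F) (h4 : 4 ≤ Δ.card)
    {X P : Finset V} (hX : X ∈ Δ) (hP : P ∈ Δ) (hXP : X ≠ P)
    (hstrong : ∀ H ∈ Δ, X ∩ P ⊆ H → H = X ∨ H = P)
    {W : Finset V} (hW : W ∈ Δ) (hWX : W ≠ X) (hWP : W ≠ P) :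
    X ∩ W ⊆ P ∩ W ∨ P ∩ W ⊆ X ∩ W := by
  rcases triple_cases hmin h4 hW hX hP hWX hWP hXP with h | h | h | h | h | h
  · exact Or.inr h
  · exact Or.inl h
  · -- P ∩ X ⊆ W ∩ X : contradicts strong pair
    exfalso
    have hXPW : X ∩ P ⊆ W := by
      intro x hx
      rw [Finset.mem_inter] at hx
      exact Finset.mem_inter.mp (h (Finset.mem_inter.mpr ⟨hx.2, hx.1⟩)) |>.1
    rcases hstrong W hW hXPW with rfl | rfl
    · exact hWX rfl
    · exact hWP rfl
  · -- W ∩ X ⊆ P ∩ X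
    refine Or.inl (Finset.subset_inter ?_ Finset.inter_subset_right)
    rw [Finset.inter_comm]
    exact h.trans Finset.inter_subset_left
  · -- X ∩ P ⊆ W ∩ P : contradicts strong pair
    exfalso
    have hXPW : X ∩ P ⊆ W := h.trans Finset.inter_subset_left
    rcases hstrong W hW hXPW with rfl | rfl
    · exact hWX rfl
    · exact hWP rfl
  · -- W ∩ P ⊆ X ∩ P
    refine Or.inr (Finset.subset_inter ?_ Finset.inter_subset_right)
    rw [Finset.inter_comm]
    exact h.trans Finset.inter_subset_left

lemma contract_mem_iff {Δ : Finset (Finset V)} {X P : Finset V} (hμ : X ∪ P ∉ Δ)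
    {W : Finset V} :
    W ∈ insert (X ∪ P) ((Δ.erase X).erase P) ↔
      W = X ∪ P ∨ (W ∈ Δ ∧ W ≠ X ∧ W ≠ P) := by
  simp only [Finset.mem_insert, Finset.mem_erase]
  tauto

lemma contract_facetc {Δ : Finset (Finset V)} (hΔ : IsFacetComplex Δ)
    (hmin : ∀ Γ ⊂ Δ, Γ.Nonempty → ∃ F, IsLeaf Γ F) (h4 : 4 ≤ Δ.card)
    {X P : Finset V} (hX : X ∈ Δ) (hP : P ∈ Δ) (hXP : X ≠ P)
    (hstrong : ∀ H ∈ Δ, X ∩ P ⊆ H → H = X ∨ H = P) :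
    IsFacetComplex (insert (X ∪ P) ((Δ.erase X).erase P)) := by
  have hμΔ : X ∪ P ∉ Δ := union_notMem hΔ hX hP hXP
  intro W₁ h₁ W₂ h₂ hsub
  rcases (contract_mem_iff hμΔ).mp h₁ with rfl | ⟨h₁Δ, h₁X, h₁P⟩
  · rcases (contract_mem_iff hμΔ).mp h₂ with h₂' | ⟨h₂Δ, h₂X, h₂P⟩
    · exact h₂'.symm
    · exfalso
      have : X ⊆ W₂ := Finset.subset_union_left.trans hsub
      exact h₂X (hΔ X hX W₂ h₂Δ this).symm
  · rcases (contract_mem_iff hμΔ).mp h₂ with rfl | ⟨h₂Δ, h₂X, h₂P⟩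
    · exfalso
      rcases strong_comparable hmin h4 hX hP hXP hstrong h₁Δ h₁X h₁P with h | h
      · -- X ∩ W₁ ⊆ P ∩ W₁, so W₁ ⊆ P
        have hW₁P : W₁ ⊆ P := by
          intro x hx
          rcases Finset.mem_union.mp (hsub hx) with hx' | hx'
          · exact (Finset.mem_inter.mp (h (Finset.mem_inter.mpr ⟨hx', hx⟩))).1
          · exact hx'
        exact h₁P (hΔ W₁ h₁Δ P hP hW₁P)
      · have hW₁X : W₁ ⊆ X := by
          intro x hx
          rcases Finset.mem_union.mp (hsub hx) with hx' | hx'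
          · exact hx'
          · exact (Finset.mem_inter.mp (h (Finset.mem_inter.mpr ⟨hx', hx⟩))).1
        exact h₁X (hΔ W₁ h₁Δ X hX hW₁X)
    · exact hΔ W₁ h₁Δ W₂ h₂Δ hsub

lemma contract_noleaf {Δ : Finset (Finset V)} (hΔ : IsFacetComplex Δ)
    (hnoleaf : ¬ ∃ F, IsLeaf Δ F)
    (hmin : ∀ Γ ⊂ Δ, Γ.Nonempty → ∃ F, IsLeaf Γ F) (h4 : 4 ≤ Δ.card)
    {X P : Finset V} (hX : X ∈ Δ) (hP : P ∈ Δ) (hXP : X ≠ P)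
    (hstrong : ∀ H ∈ Δ, X ∩ P ⊆ H → H = X ∨ H = P) :
    ¬ ∃ L, IsLeaf (insert (X ∪ P) ((Δ.erase X).erase P)) L := by
  classical
  have hμΔ : X ∪ P ∉ Δ := union_notMem hΔ hX hP hXP
  set μ := X ∪ P with hμdef
  set Δ' := insert μ ((Δ.erase X).erase P) with hΔ'def
  have hmem' : ∀ {W : Finset V}, W ∈ Δ' ↔ W = μ ∨ (W ∈ Δ ∧ W ≠ X ∧ W ≠ P) :=
    contract_mem_iff hμΔ
  have hcard' : Δ'.card = Δ.card - 1 := contract_card hX hP hXP hμΔ (by omega)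
  rintro ⟨L', hL'⟩
  obtain ⟨K', hK'mem, hcov'⟩ := exists_joint hL' (by omega)
  by_cases hL'μ : L' = μ
  · -- case (a) : the merged facet is a leaf of Δ'
    subst hL'μ
    have hK'facts := (Finset.mem_erase.mp hK'mem)
    rcases hmem'.mp hK'facts.2 with h | ⟨hK'Δ, hK'X, hK'P⟩
    · exact hK'facts.1 h
    -- double pendant: every other facet meets both X and P inside K'
    have hdp : ∀ W ∈ Δ, W ≠ X → W ≠ P → W ∩ X ⊆ K' ∩ X ∧ W ∩ P ⊆ K' ∩ P := by
      intro W hW hWX hWP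
      have hWμ : W ≠ μ := fun h => hμΔ (h ▸ hW)
      have hWmem : W ∈ Δ'.erase μ :=
        Finset.mem_erase.mpr ⟨hWμ, hmem'.mpr (Or.inr ⟨hW, hWX, hWP⟩)⟩
      have hWcov : W ∩ μ ⊆ K' ∩ μ := hcov' W hWmem
      constructor
      · intro x hx
        rw [Finset.mem_inter] at hx
        have hxμ : x ∈ W ∩ μ :=
          Finset.mem_inter.mpr ⟨hx.1, Finset.mem_union_left _ hx.2⟩
        exact Finset.mem_inter.mpr ⟨(Finset.mem_inter.mp (hWcov hxμ)).1, hx.2⟩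
      · intro x hx
        rw [Finset.mem_inter] at hx
        have hxμ : x ∈ W ∩ μ :=
          Finset.mem_inter.mpr ⟨hx.1, Finset.mem_union_right _ hx.2⟩
        exact Finset.mem_inter.mpr ⟨(Finset.mem_inter.mp (hWcov hxμ)).1, hx.2⟩
    -- Ω := Δ minus X and P has two leaves, but every leaf must equal K'
    set Ω := (Δ.erase X).erase P with hΩdef
    have hΩsub : Ω ⊆ Δ := (Finset.erase_subset _ _).trans (Finset.erase_subset _ _)
    have hXΩ : X ∉ Ω := fun h => (Finset.mem_erase.mp (Finset.mem_of_mem_erase h)).1 rfl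
    have hΩss : Ω ⊂ Δ := ssubset_of_missing hΩsub hX hXΩ
    have hΩcard : Ω.card = Δ.card - 2 := by
      rw [hΩdef, Finset.card_erase_of_mem (Finset.mem_erase.mpr ⟨hXP.symm, hP⟩),
        Finset.card_erase_of_mem hX]
      omega
    obtain ⟨T₁, hT₁Ω, T₂, hT₂Ω, hTne, hT₁, hT₂⟩ :=
      two_leaves hmin (Δ.card - 2) Ω hΩcard hΩss (by omega)
    have hclaim : ∀ T, IsLeaf Ω T → T = K' := by
      intro T hT
      by_contra hTK'
      obtain ⟨U, hUmem, hUcov⟩ := exists_joint hT (by omega)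
      have hTΔfacts : T ∈ Δ ∧ T ≠ X ∧ T ≠ P := by
        have h1 := Finset.mem_erase.mp hT.1
        have h2 := Finset.mem_erase.mp h1.2
        exact ⟨h2.2, h2.1, h1.1⟩
      have hK'Ω : K' ∈ Ω :=
        Finset.mem_erase.mpr ⟨hK'P, Finset.mem_erase.mpr ⟨hK'X, hK'Δ⟩⟩
      have hUΔ : U ∈ Δ.erase T := by
        rw [Finset.mem_erase]
        exact ⟨(Finset.mem_erase.mp hUmem).1, hΩsub (Finset.mem_of_mem_erase hUmem)⟩
      refine hnoleaf ⟨T, isLeaf_of_joint hTΔfacts.1 hUΔ ?_⟩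
      intro H hH
      have hK'cov : K' ∩ T ⊆ U ∩ T :=
        hUcov K' (Finset.mem_erase.mpr ⟨fun h => hTK' h.symm, hK'Ω⟩)
      by_cases hHX : H = X
      · subst hHX
        have h1 : T ∩ H ⊆ K' ∩ H := (hdp T hTΔfacts.1 hTΔfacts.2.1 hTΔfacts.2.2).1
        have h2 : H ∩ T ⊆ K' ∩ T := by
          intro x hx
          rw [Finset.mem_inter] at hx
          exact Finset.mem_inter.mpr
            ⟨(Finset.mem_inter.mp (h1 (Finset.mem_inter.mpr ⟨hx.2, hx.1⟩))).1, hx.2⟩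
        exact h2.trans hK'cov
      by_cases hHP : H = P
      · subst hHP
        have h1 : T ∩ H ⊆ K' ∩ H := (hdp T hTΔfacts.1 hTΔfacts.2.1 hTΔfacts.2.2).2
        have h2 : H ∩ T ⊆ K' ∩ T := by
          intro x hx
          rw [Finset.mem_inter] at hx
          exact Finset.mem_inter.mpr
            ⟨(Finset.mem_inter.mp (h1 (Finset.mem_inter.mpr ⟨hx.2, hx.1⟩))).1, hx.2⟩
        exact h2.trans hK'cov
      · refine hUcov H ?_
        rw [Finset.mem_erase] at hH ⊢
        exact ⟨hH.1, Finset.mem_erase.mpr ⟨hHP, Finset.mem_erase.mpr ⟨hHX, hH.2⟩⟩⟩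
    exact hTne ((hclaim T₁ hT₁).trans (hclaim T₂ hT₂).symm)
  · -- L' is an old facet
    obtain ⟨hL'Δ, hL'X, hL'P⟩ := (hmem'.mp hL'.1).resolve_left hL'μ
    by_cases hK'μ : K' = μ
    · -- case (b1) : the joint of L' is the merged facet
      subst hK'μ
      have hcomp := strong_comparable hmin h4 hX hP hXP hstrong hL'Δ hL'X hL'P
      have hμcov : ∀ H ∈ Δ, H ≠ X → H ≠ P → H ≠ L' → H ∩ L' ⊆ μ ∩ L' := by
        intro H hH h1 h2 h3
        refine hcov' H (Finset.mem_erase.mpr ⟨h3, hmem'.mpr (Or.inr ⟨hH, h1, h2⟩)⟩)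
      rcases hcomp with h | h
      · -- X ∩ L' ⊆ P ∩ L' : L' is a leaf of Δ with joint P
        refine hnoleaf ⟨L', isLeaf_of_joint hL'Δ
          (Finset.mem_erase.mpr ⟨fun hc => hL'P hc.symm, hP⟩) ?_⟩
        intro H hH
        rw [Finset.mem_erase] at hH
        by_cases hHX : H = X
        · subst hHX; exact h
        by_cases hHP : H = P
        · subst hHP; exact subset_rfl
        · have := hμcov H hH.2 hHX hHP hH.1
          have hdistrib : μ ∩ L' = X ∩ L' ∪ P ∩ L' := Finset.union_inter_distrib_right X P L'
          rw [hdistrib] at this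
          exact this.trans (Finset.union_subset h subset_rfl)
      · -- P ∩ L' ⊆ X ∩ L' : L' is a leaf of Δ with joint X
        refine hnoleaf ⟨L', isLeaf_of_joint hL'Δ
          (Finset.mem_erase.mpr ⟨fun hc => hL'X hc.symm, hX⟩) ?_⟩
        intro H hH
        rw [Finset.mem_erase] at hH
        by_cases hHX : H = X
        · subst hHX; exact subset_rfl
        by_cases hHP : H = P
        · subst hHP; exact h
        · have := hμcov H hH.2 hHX hHP hH.1
          have hdistrib : μ ∩ L' = X ∩ L' ∪ P ∩ L' := Finset.union_inter_distrib_right X P L'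
          rw [hdistrib] at this
          exact this.trans (Finset.union_subset subset_rfl h)
    · -- case (b2) : both L' and the joint K' are old facets; L' is a leaf of Δ
      obtain ⟨hK'Δ, hK'X, hK'P⟩ :=
        (hmem'.mp (Finset.mem_of_mem_erase hK'mem)).resolve_left hK'μ
      have hμcovL : μ ∩ L' ⊆ K' ∩ L' := by
        refine hcov' μ (Finset.mem_erase.mpr ⟨fun hc => hL'μ hc.symm, ?_⟩)
        exact Finset.mem_insert_self _ _
      refine hnoleaf ⟨L', isLeaf_of_joint hL'Δ
        (Finset.mem_erase.mpr ⟨(Finset.mem_erase.mp hK'mem).1 ∘ fun hc => hc ▸ rfl, hK'Δ⟩) ?_⟩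
      intro H hH
      rw [Finset.mem_erase] at hH
      by_cases hHX : H = X
      · subst hHX
        exact (Finset.inter_subset_inter Finset.subset_union_left subset_rfl).trans hμcovL
      by_cases hHP : H = P
      · subst hHP
        exact (Finset.inter_subset_inter Finset.subset_union_right subset_rfl).trans hμcovL
      · exact hcov' H (Finset.mem_erase.mpr ⟨hH.1, hmem'.mpr (Or.inr ⟨hH.2, hHX, hHP⟩)⟩)

lemma contract_min {Δ : Finset (Finset V)} (hΔ : IsFacetComplex Δ)
    (hmin : ∀ Γ ⊂ Δ, Γ.Nonempty → ∃ F, IsLeaf Γ F)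
    {X P : Finset V} (hX : X ∈ Δ) (hP : P ∈ Δ) (hXP : X ≠ P)
    (hstrong : ∀ H ∈ Δ, X ∩ P ⊆ H → H = X ∨ H = P) :
    ∀ Γ' ⊂ insert (X ∪ P) ((Δ.erase X).erase P), Γ'.Nonempty → ∃ L, IsLeaf Γ' L := by
  classical
  have hμΔ : X ∪ P ∉ Δ := union_notMem hΔ hX hP hXP
  set μ := X ∪ P with hμdef
  set Δ' := insert μ ((Δ.erase X).erase P) with hΔ'def
  have hmem' : ∀ {W : Finset V}, W ∈ Δ' ↔ W = μ ∨ (W ∈ Δ ∧ W ≠ X ∧ W ≠ P) :=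
    contract_mem_iff hμΔ
  have hXμ : X ≠ μ := by
    intro h
    have hPX : P ⊆ X := by
      conv_rhs => rw [h]
      exact Finset.subset_union_right
    exact hXP (hΔ P hP X hX hPX).symm
  intro Γ' hΓ'ss hΓ'ne
  have hΓ'sub : Γ' ⊆ Δ' := subset_of_ssubset hΓ'ss
  by_cases hμΓ : μ ∈ Γ'
  swap
  · -- μ ∉ Γ' : then Γ' is a proper subset of Δ
    have hsubΔ : Γ' ⊆ Δ := by
      intro W hW
      rcases hmem'.mp (hΓ'sub hW) with rfl | ⟨h, _, _⟩
      · exact absurd hW hμΓ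
      · exact h
    have hXΓ' : X ∉ Γ' := by
      intro h
      rcases hmem'.mp (hΓ'sub h) with h' | ⟨_, h', _⟩
      · exact hXμ h'
      · exact h' rfl
    exact hmin Γ' (ssubset_of_missing hsubΔ hX hXΓ') hΓ'ne
  -- μ ∈ Γ'
  set S := Γ'.erase μ with hSdef
  have hSfacts : ∀ W ∈ S, W ∈ Δ ∧ W ≠ X ∧ W ≠ P := by
    intro W hW
    rw [Finset.mem_erase] at hW
    exact (hmem'.mp (hΓ'sub hW.2)).resolve_left hW.1
  have hSsubΓ' : S ⊆ Γ' := Finset.erase_subset _ _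
  have hSΔ : ∀ W ∈ S, W ∈ Δ := fun W hW => (hSfacts W hW).1
  have hSnμ : ∀ W ∈ S, W ≠ μ := fun W hW => (Finset.mem_erase.mp hW).1
  rcases S.eq_empty_or_nonempty with hSe | hSne
  · -- Γ' = {μ}
    have : Γ' = {μ} := by
      apply Finset.eq_singleton_iff_unique_mem.mpr
      refine ⟨hμΓ, fun x hx => ?_⟩
      by_contra hxμ
      have : x ∈ S := Finset.mem_erase.mpr ⟨hxμ, hx⟩
      rw [hSe] at this
      exact absurd this (Finset.notMem_empty x)
    exact ⟨μ, by rw [this]; exact ⟨Finset.mem_singleton_self μ, Or.inl rfl⟩⟩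
  -- main case: S nonempty
  have hΓ'pos : 1 ≤ Γ'.card := Finset.card_pos.mpr ⟨μ, hμΓ⟩
  have hcardΓ' : Γ'.card < Δ'.card := Finset.card_lt_card hΓ'ss
  have hcardΔ' : Δ'.card = Δ.card - 1 := by
    refine contract_card hX hP hXP hμΔ ?_
    have hsub2 : ({X, P} : Finset (Finset V)) ⊆ Δ := by
      intro x hx
      rcases Finset.mem_insert.mp hx with rfl | hx'
      · exact hX
      · rw [Finset.mem_singleton] at hx'; subst hx'; exact hP
    calc 2 = ({X, P} : Finset (Finset V)).card := by
          rw [Finset.card_insert_of_notMem (by simp [hXP]), Finset.card_singleton]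
      _ ≤ Δ.card := Finset.card_le_card hsub2
  have hScard : S.card = Γ'.card - 1 := by rw [hSdef, Finset.card_erase_of_mem hμΓ]
  set Λ := insert X (insert P S) with hΛdef
  have hΛsub : Λ ⊆ Δ := by
    intro W hW
    rcases Finset.mem_insert.mp hW with rfl | hW'
    · exact hX
    rcases Finset.mem_insert.mp hW' with rfl | hW''
    · exact hP
    · exact hSΔ W hW''
  have hΛcard : Λ.card ≤ S.card + 2 := by
    calc Λ.card ≤ (insert P S).card + 1 := Finset.card_insert_le _ _
      _ ≤ S.card + 1 + 1 := by have := Finset.card_insert_le P S; omega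
      _ = S.card + 2 := by omega
  have hΛss : Λ ⊂ Δ := ssubset_of_card_lt hΛsub (by omega)
  obtain ⟨L'', hL''⟩ := hmin Λ hΛss ⟨X, by rw [hΛdef]; exact Finset.mem_insert_self _ _⟩
  have hΛ2 : 2 ≤ Λ.card := by
    have hsub2 : ({X, P} : Finset (Finset V)) ⊆ Λ := by
      intro x hx
      rcases Finset.mem_insert.mp hx with rfl | hx'
      · exact Finset.mem_insert_self _ _
      · rw [Finset.mem_singleton] at hx'; subst hx'
        exact Finset.mem_insert_of_mem (Finset.mem_insert_self _ _)
    calc 2 = ({X, P} : Finset (Finset V)).card := by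
          rw [Finset.card_insert_of_notMem (by simp [hXP]), Finset.card_singleton]
      _ ≤ Λ.card := Finset.card_le_card hsub2
  obtain ⟨K'', hK''mem, hcovΛ⟩ := exists_joint hL'' hΛ2
  have hXinΛ : X ∈ Λ := Finset.mem_insert_self _ _
  have hPinΛ : P ∈ Λ := Finset.mem_insert_of_mem (Finset.mem_insert_self _ _)
  have hSinΛ : ∀ W ∈ S, W ∈ Λ := fun W hW =>
    Finset.mem_insert_of_mem (Finset.mem_insert_of_mem hW)
  rcases Finset.mem_insert.mp hL''.1 with hL''X | hL''m
  · -- CASE L'' = X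
    rw [hL''X] at hcovΛ hK''mem
    have hPK : P ∩ X ⊆ K'' ∩ X := hcovΛ P (Finset.mem_erase.mpr ⟨hXP.symm, hPinΛ⟩)
    have hK''P : K'' = P := by
      have hXPK : X ∩ P ⊆ K'' := by
        intro x hx
        rw [Finset.mem_inter] at hx
        exact (Finset.mem_inter.mp (hPK (Finset.mem_inter.mpr ⟨hx.2, hx.1⟩))).1
      have hK''Δ : K'' ∈ Δ := hΛsub (Finset.mem_of_mem_erase hK''mem)
      exact (hstrong K'' hK''Δ hXPK).resolve_left (Finset.mem_erase.mp hK''mem).1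
    rw [hK''P] at hcovΛ
    have hWXP : ∀ W ∈ S, W ∩ X ⊆ P ∩ X := fun W hW =>
      hcovΛ W (Finset.mem_erase.mpr ⟨(hSfacts W hW).2.1, hSinΛ W hW⟩)
    set Λ₄ := insert P S with hΛ₄def
    have hΛ₄sub : Λ₄ ⊆ Δ := by
      intro W hW
      rcases Finset.mem_insert.mp hW with rfl | hW'
      · exact hP
      · exact hSΔ W hW'
    have hXΛ₄ : X ∉ Λ₄ := by
      intro h
      rcases Finset.mem_insert.mp h with h' | h'
      · exact hXP h'
      · exact (hSfacts X h').2.1 rfl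
    have hΛ₄ss : Λ₄ ⊂ Δ := ssubset_of_missing hΛ₄sub hX hXΛ₄
    obtain ⟨L₄, hL₄⟩ := hmin Λ₄ hΛ₄ss ⟨P, Finset.mem_insert_self _ _⟩
    have hΛ₄2 : 2 ≤ Λ₄.card := by
      obtain ⟨W₀, hW₀⟩ := hSne
      have hsub2 : ({P, W₀} : Finset (Finset V)) ⊆ Λ₄ := by
        intro x hx
        rcases Finset.mem_insert.mp hx with rfl | hx'
        · exact Finset.mem_insert_self _ _
        · rw [Finset.mem_singleton] at hx'; subst hx'
          exact Finset.mem_insert_of_mem hW₀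
      calc 2 = ({P, W₀} : Finset (Finset V)).card := by
            rw [Finset.card_insert_of_notMem (Finset.notMem_singleton.mpr
              (fun h => (hSfacts W₀ hW₀).2.2 h.symm)), Finset.card_singleton]
        _ ≤ Λ₄.card := Finset.card_le_card hsub2
    obtain ⟨K₄, hK₄mem, hcov₄⟩ := exists_joint hL₄ hΛ₄2
    rcases Finset.mem_insert.mp hL₄.1 with hL₄P | hL₄S
    · -- L₄ = P : μ is a leaf of Γ' with joint K₄
      rw [hL₄P] at hcov₄ hK₄mem
      have hK₄S : K₄ ∈ S :=
        (Finset.mem_insert.mp (Finset.mem_of_mem_erase hK₄mem)).resolve_left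
          (Finset.mem_erase.mp hK₄mem).1
      have hcovP : ∀ W ∈ S, W ∩ P ⊆ K₄ ∩ P := fun W hW =>
        hcov₄ W (Finset.mem_erase.mpr ⟨(hSfacts W hW).2.2, Finset.mem_insert_of_mem hW⟩)
      refine ⟨μ, isLeaf_of_joint hμΓ (show K₄ ∈ Γ'.erase μ from hK₄S) ?_⟩
      intro H hH
      have hHS : H ∈ S := hH
      have hHXsub : H ∩ X ⊆ H ∩ P := by
        intro x hx
        rw [Finset.mem_inter] at hx
        have := hWXP H hHS (Finset.mem_inter.mpr ⟨hx.1, hx.2⟩)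
        exact Finset.mem_inter.mpr ⟨hx.1, (Finset.mem_inter.mp this).1⟩
      have hHP' : H ∩ P ⊆ K₄ ∩ μ := (hcovP H hHS).trans
        (Finset.inter_subset_inter subset_rfl Finset.subset_union_right)
      rw [hμdef, Finset.inter_union_distrib_left]
      exact Finset.union_subset (hHXsub.trans hHP') hHP'
    · -- L₄ ∈ S : L₄ is a leaf of Γ'
      have hL₄Γ' : L₄ ∈ Γ' := hSsubΓ' hL₄S
      have hL₄nμ : L₄ ≠ μ := hSnμ L₄ hL₄S
      rcases Finset.mem_insert.mp (Finset.mem_of_mem_erase hK₄mem) with hK₄P | hK₄S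
      · -- K₄ = P : use μ as joint
        rw [hK₄P] at hcov₄
        refine ⟨L₄, isLeaf_of_joint hL₄Γ' (Finset.mem_erase.mpr ⟨hL₄nμ.symm, hμΓ⟩) ?_⟩
        intro H hH
        rw [Finset.mem_erase] at hH
        by_cases hHμ : H = μ
        · rw [hHμ]
        · have hHS : H ∈ S := Finset.mem_erase.mpr ⟨hHμ, hH.2⟩
          have h1 : H ∩ L₄ ⊆ P ∩ L₄ :=
            hcov₄ H (Finset.mem_erase.mpr ⟨hH.1, Finset.mem_insert_of_mem hHS⟩)
          refine h1.trans ?_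
          rw [hμdef]
          exact Finset.inter_subset_inter Finset.subset_union_right subset_rfl
      · -- K₄ ∈ S : use K₄ as joint
        refine ⟨L₄, isLeaf_of_joint hL₄Γ' (show K₄ ∈ Γ'.erase L₄ from
          Finset.mem_erase.mpr ⟨(Finset.mem_erase.mp hK₄mem).1, hSsubΓ' hK₄S⟩) ?_⟩
        intro H hH
        rw [Finset.mem_erase] at hH
        by_cases hHμ : H = μ
        · rw [hHμ, hμdef, Finset.union_inter_distrib_right]
          have hXL₄ : X ∩ L₄ ⊆ P ∩ L₄ := by
            intro x hx
            rw [Finset.mem_inter] at hx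
            have := hWXP L₄ hL₄S (Finset.mem_inter.mpr ⟨hx.2, hx.1⟩)
            exact Finset.mem_inter.mpr ⟨(Finset.mem_inter.mp this).1, hx.2⟩
          have hPL₄ : P ∩ L₄ ⊆ K₄ ∩ L₄ :=
            hcov₄ P (Finset.mem_erase.mpr ⟨fun h => (hSfacts L₄ hL₄S).2.2 h.symm,
              Finset.mem_insert_self _ _⟩)
          exact Finset.union_subset (hXL₄.trans hPL₄) hPL₄
        · have hHS : H ∈ S := Finset.mem_erase.mpr ⟨hHμ, hH.2⟩
          exact hcov₄ H (Finset.mem_erase.mpr ⟨hH.1, Finset.mem_insert_of_mem hHS⟩)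
  rcases Finset.mem_insert.mp hL''m with hL''P | hL''S
  · -- CASE L'' = P  (mirror)
    rw [hL''P] at hcovΛ hK''mem
    have hXK : X ∩ P ⊆ K'' ∩ P := hcovΛ X (Finset.mem_erase.mpr ⟨hXP, hXinΛ⟩)
    have hK''X : K'' = X := by
      have hXPK : X ∩ P ⊆ K'' := hXK.trans Finset.inter_subset_left
      have hK''Δ : K'' ∈ Δ := hΛsub (Finset.mem_of_mem_erase hK''mem)
      exact (hstrong K'' hK''Δ hXPK).resolve_right (Finset.mem_erase.mp hK''mem).1
    rw [hK''X] at hcovΛ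
    have hWPX : ∀ W ∈ S, W ∩ P ⊆ X ∩ P := fun W hW =>
      hcovΛ W (Finset.mem_erase.mpr ⟨(hSfacts W hW).2.2, hSinΛ W hW⟩)
    set Λ₅ := insert X S with hΛ₅def
    have hΛ₅sub : Λ₅ ⊆ Δ := by
      intro W hW
      rcases Finset.mem_insert.mp hW with rfl | hW'
      · exact hX
      · exact hSΔ W hW'
    have hPΛ₅ : P ∉ Λ₅ := by
      intro h
      rcases Finset.mem_insert.mp h with h' | h'
      · exact hXP h'.symm
      · exact (hSfacts P h').2.2 rfl
    have hΛ₅ss : Λ₅ ⊂ Δ := ssubset_of_missing hΛ₅sub hP hPΛ₅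
    obtain ⟨L₅, hL₅⟩ := hmin Λ₅ hΛ₅ss ⟨X, Finset.mem_insert_self _ _⟩
    have hΛ₅2 : 2 ≤ Λ₅.card := by
      obtain ⟨W₀, hW₀⟩ := hSne
      have hsub2 : ({X, W₀} : Finset (Finset V)) ⊆ Λ₅ := by
        intro x hx
        rcases Finset.mem_insert.mp hx with rfl | hx'
        · exact Finset.mem_insert_self _ _
        · rw [Finset.mem_singleton] at hx'; subst hx'
          exact Finset.mem_insert_of_mem hW₀
      calc 2 = ({X, W₀} : Finset (Finset V)).card := by
            rw [Finset.card_insert_of_notMem (Finset.notMem_singleton.mpr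
              (fun h => (hSfacts W₀ hW₀).2.1 h.symm)), Finset.card_singleton]
        _ ≤ Λ₅.card := Finset.card_le_card hsub2
    obtain ⟨K₅, hK₅mem, hcov₅⟩ := exists_joint hL₅ hΛ₅2
    rcases Finset.mem_insert.mp hL₅.1 with hL₅X | hL₅S
    · -- L₅ = X : μ is a leaf of Γ' with joint K₅
      rw [hL₅X] at hcov₅ hK₅mem
      have hK₅S : K₅ ∈ S :=
        (Finset.mem_insert.mp (Finset.mem_of_mem_erase hK₅mem)).resolve_left
          (Finset.mem_erase.mp hK₅mem).1
      have hcovX : ∀ W ∈ S, W ∩ X ⊆ K₅ ∩ X := fun W hW =>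
        hcov₅ W (Finset.mem_erase.mpr ⟨(hSfacts W hW).2.1, Finset.mem_insert_of_mem hW⟩)
      refine ⟨μ, isLeaf_of_joint hμΓ (show K₅ ∈ Γ'.erase μ from hK₅S) ?_⟩
      intro H hH
      have hHS : H ∈ S := hH
      have hHPsub : H ∩ P ⊆ H ∩ X := by
        intro x hx
        rw [Finset.mem_inter] at hx
        have := hWPX H hHS (Finset.mem_inter.mpr ⟨hx.1, hx.2⟩)
        exact Finset.mem_inter.mpr ⟨hx.1, (Finset.mem_inter.mp this).1⟩
      have hHX' : H ∩ X ⊆ K₅ ∩ μ := (hcovX H hHS).trans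
        (Finset.inter_subset_inter subset_rfl Finset.subset_union_left)
      rw [hμdef, Finset.inter_union_distrib_left]
      exact Finset.union_subset hHX' (hHPsub.trans hHX')
    · -- L₅ ∈ S : L₅ is a leaf of Γ'
      have hL₅Γ' : L₅ ∈ Γ' := hSsubΓ' hL₅S
      have hL₅nμ : L₅ ≠ μ := hSnμ L₅ hL₅S
      rcases Finset.mem_insert.mp (Finset.mem_of_mem_erase hK₅mem) with hK₅X | hK₅S
      · -- K₅ = X : use μ as joint
        rw [hK₅X] at hcov₅
        refine ⟨L₅, isLeaf_of_joint hL₅Γ' (Finset.mem_erase.mpr ⟨hL₅nμ.symm, hμΓ⟩) ?_⟩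
        intro H hH
        rw [Finset.mem_erase] at hH
        by_cases hHμ : H = μ
        · rw [hHμ]
        · have hHS : H ∈ S := Finset.mem_erase.mpr ⟨hHμ, hH.2⟩
          have h1 : H ∩ L₅ ⊆ X ∩ L₅ :=
            hcov₅ H (Finset.mem_erase.mpr ⟨hH.1, Finset.mem_insert_of_mem hHS⟩)
          refine h1.trans ?_
          rw [hμdef]
          exact Finset.inter_subset_inter Finset.subset_union_left subset_rfl
      · -- K₅ ∈ S : use K₅ as joint
        refine ⟨L₅, isLeaf_of_joint hL₅Γ' (show K₅ ∈ Γ'.erase L₅ from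
          Finset.mem_erase.mpr ⟨(Finset.mem_erase.mp hK₅mem).1, hSsubΓ' hK₅S⟩) ?_⟩
        intro H hH
        rw [Finset.mem_erase] at hH
        by_cases hHμ : H = μ
        · rw [hHμ, hμdef, Finset.union_inter_distrib_right]
          have hPL₅ : P ∩ L₅ ⊆ X ∩ L₅ := by
            intro x hx
            rw [Finset.mem_inter] at hx
            have := hWPX L₅ hL₅S (Finset.mem_inter.mpr ⟨hx.2, hx.1⟩)
            exact Finset.mem_inter.mpr ⟨(Finset.mem_inter.mp this).1, hx.2⟩
          have hXL₅ : X ∩ L₅ ⊆ K₅ ∩ L₅ :=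
            hcov₅ X (Finset.mem_erase.mpr ⟨fun h => (hSfacts L₅ hL₅S).2.1 h.symm,
              Finset.mem_insert_self _ _⟩)
          exact Finset.union_subset hXL₅ (hPL₅.trans hXL₅)
        · have hHS : H ∈ S := Finset.mem_erase.mpr ⟨hHμ, hH.2⟩
          exact hcov₅ H (Finset.mem_erase.mpr ⟨hH.1, Finset.mem_insert_of_mem hHS⟩)
  · -- CASE L'' ∈ S : L'' is a leaf of Γ'
    have hL''Γ' : L'' ∈ Γ' := hSsubΓ' hL''S
    have hL''X : L'' ≠ X := (hSfacts L'' hL''S).2.1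
    have hL''P : L'' ≠ P := (hSfacts L'' hL''S).2.2
    have hXcov : X ∩ L'' ⊆ K'' ∩ L'' :=
      hcovΛ X (Finset.mem_erase.mpr ⟨hL''X.symm, hXinΛ⟩)
    have hPcov : P ∩ L'' ⊆ K'' ∩ L'' :=
      hcovΛ P (Finset.mem_erase.mpr ⟨hL''P.symm, hPinΛ⟩)
    rcases Finset.mem_insert.mp (Finset.mem_of_mem_erase hK''mem) with hK''X | hK''m
    · -- K'' = X : use μ as joint
      refine ⟨L'', isLeaf_of_joint hL''Γ' (Finset.mem_erase.mpr
        ⟨(hSnμ L'' hL''S).symm, hμΓ⟩) ?_⟩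
      intro H hH
      rw [Finset.mem_erase] at hH
      by_cases hHμ : H = μ
      · rw [hHμ]
      · have hHS : H ∈ S := Finset.mem_erase.mpr ⟨hHμ, hH.2⟩
        have h1 : H ∩ L'' ⊆ K'' ∩ L'' :=
          hcovΛ H (Finset.mem_erase.mpr ⟨hH.1, hSinΛ H hHS⟩)
        rw [hK''X] at h1
        refine h1.trans ?_
        rw [hμdef]
        exact Finset.inter_subset_inter Finset.subset_union_left subset_rfl
    rcases Finset.mem_insert.mp hK''m with hK''P | hK''S
    · -- K'' = P : use μ as joint
      refine ⟨L'', isLeaf_of_joint hL''Γ' (Finset.mem_erase.mpr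
        ⟨(hSnμ L'' hL''S).symm, hμΓ⟩) ?_⟩
      intro H hH
      rw [Finset.mem_erase] at hH
      by_cases hHμ : H = μ
      · rw [hHμ]
      · have hHS : H ∈ S := Finset.mem_erase.mpr ⟨hHμ, hH.2⟩
        have h1 : H ∩ L'' ⊆ K'' ∩ L'' :=
          hcovΛ H (Finset.mem_erase.mpr ⟨hH.1, hSinΛ H hHS⟩)
        rw [hK''P] at h1
        refine h1.trans ?_
        rw [hμdef]
        exact Finset.inter_subset_inter Finset.subset_union_right subset_rfl
    · -- K'' ∈ S : use K'' as joint
      refine ⟨L'', isLeaf_of_joint hL''Γ' (show K'' ∈ Γ'.erase L'' from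
        Finset.mem_erase.mpr ⟨(Finset.mem_erase.mp hK''mem).1, hSsubΓ' hK''S⟩) ?_⟩
      intro H hH
      rw [Finset.mem_erase] at hH
      by_cases hHμ : H = μ
      · rw [hHμ, hμdef, Finset.union_inter_distrib_right]
        exact Finset.union_subset hXcov hPcov
      · have hHS : H ∈ S := Finset.mem_erase.mpr ⟨hHμ, hH.2⟩
        exact hcovΛ H (Finset.mem_erase.mpr ⟨hH.1, hSinΛ H hHS⟩)

lemma chain_lemma {Δ : Finset (Finset V)}
    (hmin : ∀ Γ ⊂ Δ, Γ.Nonempty → ∃ F, IsLeaf Γ F) (h4 : 4 ≤ Δ.card) {A : Finset V}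
    {X Y Hd : Finset V} (hXΔ : X ∈ Δ) (hAX : A ⊆ X) (hYΔ : Y ∈ Δ) (hAY : A ⊆ Y)
    (hXY : X ≠ Y) (hHdΔ : Hd ∈ Δ) (hAHd : ¬ A ⊆ Hd) :
    X ∩ Hd ⊆ Y ∩ Hd ∨ Y ∩ Hd ⊆ X ∩ Hd := by
  have hHdX : Hd ≠ X := fun h => hAHd (h ▸ hAX)
  have hHdY : Hd ≠ Y := fun h => hAHd (h ▸ hAY)
  rcases triple_cases hmin h4 hHdΔ hXΔ hYΔ hHdX hHdY hXY with h | h | h | h | h | h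
  · exact Or.inr h
  · exact Or.inl h
  · -- Y ∩ X ⊆ Hd ∩ X : impossible, A ⊆ Y ∩ X would give A ⊆ Hd
    exact absurd (fun x hx => (Finset.mem_inter.mp
      (h (Finset.mem_inter.mpr ⟨hAY hx, hAX hx⟩))).1) hAHd
  · -- Hd ∩ X ⊆ Y ∩ X
    refine Or.inl ?_
    intro x hx
    rw [Finset.mem_inter] at hx
    have := h (Finset.mem_inter.mpr ⟨hx.2, hx.1⟩)
    exact Finset.mem_inter.mpr ⟨(Finset.mem_inter.mp this).1, hx.2⟩
  · exact absurd (fun x hx => (Finset.mem_inter.mp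
      (h (Finset.mem_inter.mpr ⟨hAX hx, hAY hx⟩))).1) hAHd
  · refine Or.inr ?_
    intro x hx
    rw [Finset.mem_inter] at hx
    have := h (Finset.mem_inter.mpr ⟨hx.2, hx.1⟩)
    exact Finset.mem_inter.mpr ⟨(Finset.mem_inter.mp this).1, hx.2⟩

theorem cycle_non_neighbors_intersection (Δ : Finset (Finset V))
    (hΔ : IsFacetComplex Δ) (hcyc : IsCycle Δ) (F G : Finset V)
    (hF : F ∈ Δ) (hG : G ∈ Δ) (hne : F ≠ G)
    (hns : ¬ StrongNeighbor Δ F G) :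
    ∀ H ∈ Δ, F ∩ G ⊆ H := by
  classical
  suffices Hmain : ∀ n : ℕ, ∀ Δ : Finset (Finset V), Δ.card = n →
      IsFacetComplex Δ → IsCycle Δ → ∀ F G : Finset V, F ∈ Δ → G ∈ Δ → F ≠ G →
      ¬ StrongNeighbor Δ F G → ∀ H ∈ Δ, F ∩ G ⊆ H by
    exact fun H hH => Hmain Δ.card Δ rfl hΔ hcyc F G hF hG hne hns H hH
  clear hΔ hcyc hF hG hne hns Δ F G
  intro n
  induction n using Nat.strong_induction_on with
  | _ n IH =>
  intro Δ hcard hΔ hcyc F G hF hG hne hns H₀ hH₀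
  by_contra hAH₀
  obtain ⟨hΔne, hnoleaf, hmin⟩ := hcyc
  set A := F ∩ G with hAdef
  have hAF : A ⊆ F := Finset.inter_subset_left
  have hAG : A ⊆ G := Finset.inter_subset_right
  -- witness that F, G are not strong neighbors
  have hsn : ¬ ∀ H ∈ Δ, F ∩ G ⊆ H → H = F ∨ H = G := fun h => hns ⟨hF, hG, hne, h⟩
  push_neg at hsn
  obtain ⟨H₁, hH₁Δ, hAH₁, hH₁F, hH₁G⟩ := hsn
  -- distinctness
  have hH₀F : H₀ ≠ F := fun h => hAH₀ (h ▸ hAF)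
  have hH₀G : H₀ ≠ G := fun h => hAH₀ (h ▸ hAG)
  have hH₀H₁ : H₀ ≠ H₁ := fun h => hAH₀ (h ▸ hAH₁)
  -- at least four facets
  have h4 : 4 ≤ Δ.card := by
    have hsub : ({F, G, H₁, H₀} : Finset (Finset V)) ⊆ Δ := by
      intro x hx
      rcases Finset.mem_insert.mp hx with rfl | hx
      · exact hF
      rcases Finset.mem_insert.mp hx with rfl | hx
      · exact hG
      rcases Finset.mem_insert.mp hx with rfl | hx
      · exact hH₁Δ
      · rw [Finset.mem_singleton] at hx; subst hx; exact hH₀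
    have hc : ({F, G, H₁, H₀} : Finset (Finset V)).card = 4 := by
      have h1 : F ∉ ({G, H₁, H₀} : Finset (Finset V)) := by
        simp only [Finset.mem_insert, Finset.mem_singleton]
        push_neg
        exact ⟨hne, Ne.symm hH₁F, Ne.symm hH₀F⟩
      have h2 : G ∉ ({H₁, H₀} : Finset (Finset V)) := by
        simp only [Finset.mem_insert, Finset.mem_singleton]
        push_neg
        exact ⟨Ne.symm hH₁G, Ne.symm hH₀G⟩
      have h3 : H₁ ∉ ({H₀} : Finset (Finset V)) :=
        Finset.notMem_singleton.mpr (Ne.symm hH₀H₁)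
      rw [Finset.card_insert_of_notMem h1, Finset.card_insert_of_notMem h2,
        Finset.card_insert_of_notMem h3, Finset.card_singleton]
    calc 4 = ({F, G, H₁, H₀} : Finset (Finset V)).card := hc.symm
      _ ≤ Δ.card := Finset.card_le_card hsub
  -- the set of facets not containing A
  set D := Δ.filter (fun W => ¬ A ⊆ W) with hDdef
  have hH₀D : H₀ ∈ D := Finset.mem_filter.mpr ⟨hH₀, hAH₀⟩
  have hDpos : 1 ≤ D.card := Finset.card_pos.mpr ⟨H₀, hH₀D⟩
  have hchain : ∀ X ∈ Δ, A ⊆ X → ∀ Y ∈ Δ, A ⊆ Y → X ≠ Y → ∀ Hd ∈ Δ, ¬ A ⊆ Hd →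
      (X ∩ Hd ⊆ Y ∩ Hd ∨ Y ∩ Hd ⊆ X ∩ Hd) :=
    fun X hX hAX Y hY hAY hXY Hd hHd hAHd =>
      chain_lemma hmin h4 hX hAX hY hAY hXY hHd hAHd
  by_cases hD1 : D.card = 1
  · -- |D| = 1 : H₀ would be a leaf of Δ
    have hall : ∀ W ∈ Δ, W ≠ H₀ → A ⊆ W := by
      intro W hW hWH₀
      by_contra h
      have hWD : W ∈ D := Finset.mem_filter.mpr ⟨hW, h⟩
      obtain ⟨w, hw⟩ := Finset.card_eq_one.mp hD1
      rw [hw, Finset.mem_singleton] at hWD hH₀D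
      exact hWH₀ (hWD.trans hH₀D.symm)
    have hcomp : ∀ X ∈ Δ.erase H₀, ∀ Y ∈ Δ.erase H₀,
        X ∩ H₀ ⊆ Y ∩ H₀ ∨ Y ∩ H₀ ⊆ X ∩ H₀ := by
      intro X hX Y hY
      rw [Finset.mem_erase] at hX hY
      by_cases hXY : X = Y
      · subst hXY; exact Or.inl subset_rfl
      · exact hchain X hX.2 (hall X hX.2 hX.1) Y hY.2 (hall Y hY.2 hY.1) hXY H₀ hH₀ hAH₀
    have hneΨ : (Δ.erase H₀).Nonempty :=
      ⟨F, Finset.mem_erase.mpr ⟨Ne.symm hH₀F, hF⟩⟩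
    obtain ⟨M, hM, hMmax⟩ := exists_max_inter hneΨ hcomp
    exact hnoleaf ⟨H₀, isLeaf_of_joint hH₀ hM hMmax⟩
  by_cases hD2 : D.card = 2
  · -- |D| = 2 : a four-element subset of Δ with no leaf, contradiction
    set Γ := Δ.filter (fun W => A ⊆ W) with hΓdef
    have hΓmem : ∀ W ∈ Γ, W ∈ Δ ∧ A ⊆ W := fun W hW => Finset.mem_filter.mp hW
    have hFΓ : F ∈ Γ := Finset.mem_filter.mpr ⟨hF, hAF⟩
    have hGΓ : G ∈ Γ := Finset.mem_filter.mpr ⟨hG, hAG⟩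
    have hH₁Γ : H₁ ∈ Γ := Finset.mem_filter.mpr ⟨hH₁Δ, hAH₁⟩
    have hΓsub : Γ ⊆ Δ := Finset.filter_subset _ _
    have hH₀Γ : H₀ ∉ Γ := fun h => hAH₀ (Finset.mem_filter.mp h).2
    have hΓss : Γ ⊂ Δ := ssubset_of_missing hΓsub hH₀ hH₀Γ
    have hΓ2 : 2 ≤ Γ.card := by
      have hsub2 : ({F, G} : Finset (Finset V)) ⊆ Γ := by
        intro x hx
        rcases Finset.mem_insert.mp hx with rfl | hx
        · exact hFΓ
        · rw [Finset.mem_singleton] at hx; subst hx; exact hGΓ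
      calc 2 = ({F, G} : Finset (Finset V)).card := by
            rw [Finset.card_insert_of_notMem (Finset.notMem_singleton.mpr hne),
              Finset.card_singleton]
        _ ≤ Γ.card := Finset.card_le_card hsub2
    obtain ⟨L₁, hL₁Γ, L₂, hL₂Γ, hL₁₂, hLeaf₁, hLeaf₂⟩ :=
      two_leaves hmin Γ.card Γ rfl hΓss hΓ2
    obtain ⟨K₁, hK₁mem, hcov₁⟩ := exists_joint hLeaf₁ hΓ2
    obtain ⟨K₂, hK₂mem, hcov₂⟩ := exists_joint hLeaf₂ hΓ2
    have hL₁Δ : L₁ ∈ Δ := hΓsub hL₁Γ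
    have hL₂Δ : L₂ ∈ Δ := hΓsub hL₂Γ
    have hAL₁ : A ⊆ L₁ := (hΓmem L₁ hL₁Γ).2
    have hAL₂ : A ⊆ L₂ := (hΓmem L₂ hL₂Γ).2
    -- extract the bad facets Z₁, Z₂ (in D) witnessing that L₁, L₂ are not leaves of Δ
    have hK₁Δe : K₁ ∈ Δ.erase L₁ := Finset.mem_erase.mpr
      ⟨(Finset.mem_erase.mp hK₁mem).1, hΓsub (Finset.mem_of_mem_erase hK₁mem)⟩
    have hK₂Δe : K₂ ∈ Δ.erase L₂ := Finset.mem_erase.mpr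
      ⟨(Finset.mem_erase.mp hK₂mem).1, hΓsub (Finset.mem_of_mem_erase hK₂mem)⟩
    obtain ⟨Z₁, hZ₁mem, hZ₁bad⟩ := nofull hnoleaf hL₁Δ hK₁Δe
    obtain ⟨Z₂, hZ₂mem, hZ₂bad⟩ := nofull hnoleaf hL₂Δ hK₂Δe
    have hZ₁Δ : Z₁ ∈ Δ := (Finset.mem_erase.mp hZ₁mem).2
    have hZ₂Δ : Z₂ ∈ Δ := (Finset.mem_erase.mp hZ₂mem).2
    have hZ₁nA : ¬ A ⊆ Z₁ := by
      intro h
      refine hZ₁bad (hcov₁ Z₁ (Finset.mem_erase.mpr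
        ⟨(Finset.mem_erase.mp hZ₁mem).1, Finset.mem_filter.mpr ⟨hZ₁Δ, h⟩⟩))
    have hZ₂nA : ¬ A ⊆ Z₂ := by
      intro h
      refine hZ₂bad (hcov₂ Z₂ (Finset.mem_erase.mpr
        ⟨(Finset.mem_erase.mp hZ₂mem).1, Finset.mem_filter.mpr ⟨hZ₂Δ, h⟩⟩))
    have hZ₁D : Z₁ ∈ D := Finset.mem_filter.mpr ⟨hZ₁Δ, hZ₁nA⟩
    have hZ₂D : Z₂ ∈ D := Finset.mem_filter.mpr ⟨hZ₂Δ, hZ₂nA⟩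
    -- Z₁ ≠ Z₂
    have hZ₁₂ : Z₁ ≠ Z₂ := by
      intro h
      rcases hchain L₁ hL₁Δ hAL₁ L₂ hL₂Δ hAL₂ hL₁₂ Z₁ hZ₁Δ hZ₁nA with hc | hc
      · refine hZ₁bad ?_
        intro x hx
        rw [Finset.mem_inter] at hx
        have hxL₂ : x ∈ L₂ := (Finset.mem_inter.mp
          (hc (Finset.mem_inter.mpr ⟨hx.2, hx.1⟩))).1
        exact hcov₁ L₂ (Finset.mem_erase.mpr ⟨hL₁₂.symm, hL₂Γ⟩)
          (Finset.mem_inter.mpr ⟨hxL₂, hx.2⟩)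
      · rw [← h] at hZ₂bad
        refine hZ₂bad ?_
        intro x hx
        rw [Finset.mem_inter] at hx
        have hxL₁ : x ∈ L₁ := (Finset.mem_inter.mp
          (hc (Finset.mem_inter.mpr ⟨hx.2, hx.1⟩))).1
        exact hcov₂ L₁ (Finset.mem_erase.mpr ⟨hL₁₂, hL₁Γ⟩)
          (Finset.mem_inter.mpr ⟨hxL₁, hx.2⟩)
    -- D = {Z₁, Z₂}
    have hDeq : D = {Z₁, Z₂} := by
      have hsub' : ({Z₁, Z₂} : Finset (Finset V)) ⊆ D := by
        intro x hx
        rcases Finset.mem_insert.mp hx with rfl | hx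
        · exact hZ₁D
        · rw [Finset.mem_singleton] at hx; subst hx; exact hZ₂D
      refine (Finset.eq_of_subset_of_card_le hsub' ?_).symm
      rw [hD2, Finset.card_insert_of_notMem (Finset.notMem_singleton.mpr hZ₁₂),
        Finset.card_singleton]
    -- maximal-trace property of Z-facets
    have hM₁ : ∀ X ∈ Γ, X ≠ L₁ → X ∩ Z₁ ⊆ L₁ ∩ Z₁ := by
      intro X hXΓ hXL₁
      rcases hchain X (hΓmem X hXΓ).1 (hΓmem X hXΓ).2 L₁ hL₁Δ hAL₁ hXL₁
        Z₁ hZ₁Δ hZ₁nA with hc | hc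
      · exact hc
      · exfalso
        refine hZ₁bad ?_
        intro x hx
        rw [Finset.mem_inter] at hx
        have hxX : x ∈ X := (Finset.mem_inter.mp
          (hc (Finset.mem_inter.mpr ⟨hx.2, hx.1⟩))).1
        exact hcov₁ X (Finset.mem_erase.mpr ⟨hXL₁, hXΓ⟩)
          (Finset.mem_inter.mpr ⟨hxX, hx.2⟩)
    have hM₂ : ∀ X ∈ Γ, X ≠ L₂ → X ∩ Z₂ ⊆ L₂ ∩ Z₂ := by
      intro X hXΓ hXL₂
      rcases hchain X (hΓmem X hXΓ).1 (hΓmem X hXΓ).2 L₂ hL₂Δ hAL₂ hXL₂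
        Z₂ hZ₂Δ hZ₂nA with hc | hc
      · exact hc
      · exfalso
        refine hZ₂bad ?_
        intro x hx
        rw [Finset.mem_inter] at hx
        have hxX : x ∈ X := (Finset.mem_inter.mp
          (hc (Finset.mem_inter.mpr ⟨hx.2, hx.1⟩))).1
        exact hcov₂ X (Finset.mem_erase.mpr ⟨hXL₂, hXΓ⟩)
          (Finset.mem_inter.mpr ⟨hxX, hx.2⟩)
    have hL₁Z₁ : L₁ ≠ Z₁ := fun h => hZ₁nA (h ▸ hAL₁)
    have hL₂Z₂ : L₂ ≠ Z₂ := fun h => hZ₂nA (h ▸ hAL₂)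
    have hL₁Z₂ : L₁ ≠ Z₂ := fun h => hZ₂nA (h ▸ hAL₁)
    have hL₂Z₁ : L₂ ≠ Z₁ := fun h => hZ₁nA (h ▸ hAL₂)
    -- the mutual pokes
    have hpoke₁ : ¬ Z₂ ∩ Z₁ ⊆ L₁ ∩ Z₁ := by
      obtain ⟨Z₃, hZ₃mem, hZ₃bad⟩ := nofull hnoleaf hZ₁Δ
        (Finset.mem_erase.mpr ⟨hL₁Z₁, hL₁Δ⟩)
      have hZ₃Δ : Z₃ ∈ Δ := (Finset.mem_erase.mp hZ₃mem).2
      have hZ₃Z₂ : Z₃ = Z₂ := by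
        by_cases hA₃ : A ⊆ Z₃
        · exfalso
          by_cases hZ₃L₁ : Z₃ = L₁
          · exact hZ₃bad (by rw [hZ₃L₁])
          · exact hZ₃bad (hM₁ Z₃ (Finset.mem_filter.mpr ⟨hZ₃Δ, hA₃⟩) hZ₃L₁)
        · have hZ₃D : Z₃ ∈ D := Finset.mem_filter.mpr ⟨hZ₃Δ, hA₃⟩
          rw [hDeq] at hZ₃D
          rcases Finset.mem_insert.mp hZ₃D with h | h
          · exact absurd h (Finset.mem_erase.mp hZ₃mem).1
          · exact Finset.mem_singleton.mp h
      rw [← hZ₃Z₂]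
      exact hZ₃bad
    have hpoke₂ : ¬ Z₁ ∩ Z₂ ⊆ L₂ ∩ Z₂ := by
      obtain ⟨Z₃, hZ₃mem, hZ₃bad⟩ := nofull hnoleaf hZ₂Δ
        (Finset.mem_erase.mpr ⟨hL₂Z₂, hL₂Δ⟩)
      have hZ₃Δ : Z₃ ∈ Δ := (Finset.mem_erase.mp hZ₃mem).2
      have hZ₃Z₁ : Z₃ = Z₁ := by
        by_cases hA₃ : A ⊆ Z₃
        · exfalso
          by_cases hZ₃L₂ : Z₃ = L₂
          · exact hZ₃bad (by rw [hZ₃L₂])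
          · exact hZ₃bad (hM₂ Z₃ (Finset.mem_filter.mpr ⟨hZ₃Δ, hA₃⟩) hZ₃L₂)
        · have hZ₃D : Z₃ ∈ D := Finset.mem_filter.mpr ⟨hZ₃Δ, hA₃⟩
          rw [hDeq] at hZ₃D
          rcases Finset.mem_insert.mp hZ₃D with h | h
          · exact h
          · exact absurd (Finset.mem_singleton.mp h) (Finset.mem_erase.mp hZ₃mem).1
      rw [← hZ₃Z₁]
      exact hZ₃bad
    -- the cross facts : Z₂ does not poke L₁ and Z₁ does not poke L₂
    have hcross₁ : Z₂ ∩ L₁ ⊆ K₁ ∩ L₁ := by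
      by_contra hbad
      rcases hchain L₁ hL₁Δ hAL₁ L₂ hL₂Δ hAL₂ hL₁₂ Z₂ hZ₂Δ hZ₂nA with hc | hc
      · refine hbad ?_
        intro x hx
        rw [Finset.mem_inter] at hx
        have hxL₂ : x ∈ L₂ := (Finset.mem_inter.mp
          (hc (Finset.mem_inter.mpr ⟨hx.2, hx.1⟩))).1
        exact hcov₁ L₂ (Finset.mem_erase.mpr ⟨hL₁₂.symm, hL₂Γ⟩)
          (Finset.mem_inter.mpr ⟨hxL₂, hx.2⟩)
      · refine hZ₂bad ?_
        intro x hx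
        rw [Finset.mem_inter] at hx
        have hxL₁ : x ∈ L₁ := (Finset.mem_inter.mp
          (hc (Finset.mem_inter.mpr ⟨hx.2, hx.1⟩))).1
        exact hcov₂ L₁ (Finset.mem_erase.mpr ⟨hL₁₂, hL₁Γ⟩)
          (Finset.mem_inter.mpr ⟨hxL₁, hx.2⟩)
    have hcross₂ : Z₁ ∩ L₂ ⊆ K₂ ∩ L₂ := by
      by_contra hbad
      rcases hchain L₂ hL₂Δ hAL₂ L₁ hL₁Δ hAL₁ hL₁₂.symm Z₁ hZ₁Δ hZ₁nA with hc | hc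
      · refine hbad ?_
        intro x hx
        rw [Finset.mem_inter] at hx
        have hxL₁ : x ∈ L₁ := (Finset.mem_inter.mp
          (hc (Finset.mem_inter.mpr ⟨hx.2, hx.1⟩))).1
        exact hcov₂ L₁ (Finset.mem_erase.mpr ⟨hL₁₂, hL₁Γ⟩)
          (Finset.mem_inter.mpr ⟨hxL₁, hx.2⟩)
      · refine hZ₁bad ?_
        intro x hx
        rw [Finset.mem_inter] at hx
        have hxL₂ : x ∈ L₂ := (Finset.mem_inter.mp
          (hc (Finset.mem_inter.mpr ⟨hx.2, hx.1⟩))).1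
        exact hcov₁ L₂ (Finset.mem_erase.mpr ⟨hL₁₂.symm, hL₂Γ⟩)
          (Finset.mem_inter.mpr ⟨hxL₂, hx.2⟩)
    -- a third element of Γ, so that Θ below is a proper subset
    have hthird : ∃ Y ∈ Γ, Y ≠ L₁ ∧ Y ≠ L₂ := by
      by_contra h
      push_neg at h
      have hmem2 : ∀ Y ∈ Γ, Y = L₁ ∨ Y = L₂ := by
        intro Y hY
        by_cases h1 : Y = L₁
        · exact Or.inl h1
        · exact Or.inr (h Y hY h1)
      rcases hmem2 F hFΓ with hF1 | hF1 <;> rcases hmem2 G hGΓ with hG1 | hG1 <;>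
        rcases hmem2 H₁ hH₁Γ with hH1 | hH1 <;>
        first
          | exact hne (hF1.trans hG1.symm)
          | exact hH₁F (hH1.trans hF1.symm)
          | exact hH₁G (hH1.trans hG1.symm)
    obtain ⟨Y, hYΓ, hYL₁, hYL₂⟩ := hthird
    set Θ : Finset (Finset V) := {L₁, L₂, Z₁, Z₂} with hΘdef
    have hΘsub : Θ ⊆ Δ := by
      intro x hx
      rw [hΘdef] at hx
      rcases Finset.mem_insert.mp hx with rfl | hx
      · exact hL₁Δ
      rcases Finset.mem_insert.mp hx with rfl | hx
      · exact hL₂Δ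
      rcases Finset.mem_insert.mp hx with rfl | hx
      · exact hZ₁Δ
      · rw [Finset.mem_singleton] at hx; subst hx; exact hZ₂Δ
    have hYΘ : Y ∉ Θ := by
      rw [hΘdef]
      simp only [Finset.mem_insert, Finset.mem_singleton]
      push_neg
      exact ⟨hYL₁, hYL₂, fun h => hZ₁nA (h ▸ (hΓmem Y hYΓ).2),
        fun h => hZ₂nA (h ▸ (hΓmem Y hYΓ).2)⟩
    have hΘss : Θ ⊂ Δ := ssubset_of_missing hΘsub (hΓsub hYΓ) hYΘ
    have hL₁Θ : L₁ ∈ Θ := by rw [hΘdef]; exact Finset.mem_insert_self _ _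
    have hL₂Θ : L₂ ∈ Θ := by
      rw [hΘdef]; exact Finset.mem_insert_of_mem (Finset.mem_insert_self _ _)
    have hZ₁Θ : Z₁ ∈ Θ := by
      rw [hΘdef]
      exact Finset.mem_insert_of_mem (Finset.mem_insert_of_mem (Finset.mem_insert_self _ _))
    have hZ₂Θ : Z₂ ∈ Θ := by
      rw [hΘdef]
      exact Finset.mem_insert_of_mem (Finset.mem_insert_of_mem
        (Finset.mem_insert_of_mem (Finset.mem_singleton_self _)))
    have hΘ2 : 2 ≤ Θ.card := by
      have hsub2 : ({L₁, L₂} : Finset (Finset V)) ⊆ Θ := by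
        intro x hx
        rcases Finset.mem_insert.mp hx with rfl | hx
        · exact hL₁Θ
        · rw [Finset.mem_singleton] at hx; subst hx; exact hL₂Θ
      calc 2 = ({L₁, L₂} : Finset (Finset V)).card := by
            rw [Finset.card_insert_of_notMem (Finset.notMem_singleton.mpr hL₁₂),
              Finset.card_singleton]
        _ ≤ Θ.card := Finset.card_le_card hsub2
    obtain ⟨L, hLleaf⟩ := hmin Θ hΘss ⟨L₁, hL₁Θ⟩
    obtain ⟨K, hKmem, hcovΘ⟩ := exists_joint hLleaf hΘ2
    have hLΘ := hLleaf.1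
    rw [hΘdef] at hLΘ
    have hKmem' := hKmem
    rw [Finset.mem_erase, hΘdef] at hKmem'
    -- now the twelve-case analysis
    rcases Finset.mem_insert.mp hLΘ with hLL₁ | hLΘ'
    · -- L = L₁
      rcases Finset.mem_insert.mp hKmem'.2 with hKL₁ | hK'
      · exact (hLL₁ ▸ hKmem'.1) hKL₁
      rcases Finset.mem_insert.mp hK' with hKL₂ | hK'
      · -- K = L₂ : Z₁ ∩ L₁ ⊆ L₂ ∩ L₁ ⊆ K₁ ∩ L₁, contradicting hZ₁bad
        refine hZ₁bad ?_
        have h1 : Z₁ ∩ L ⊆ K ∩ L :=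
          hcovΘ Z₁ (Finset.mem_erase.mpr ⟨by rw [hLL₁]; exact hL₁Z₁.symm, hZ₁Θ⟩)
        rw [hLL₁, hKL₂] at h1
        exact h1.trans (hcov₁ L₂ (Finset.mem_erase.mpr ⟨hL₁₂.symm, hL₂Γ⟩))
      rcases Finset.mem_insert.mp hK' with hKZ₁ | hK'
      · -- K = Z₁ : A ⊆ L₂ ∩ L₁ ⊆ Z₁
        have h1 : L₂ ∩ L ⊆ K ∩ L :=
          hcovΘ L₂ (Finset.mem_erase.mpr ⟨by rw [hLL₁]; exact hL₁₂.symm, hL₂Θ⟩)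
        rw [hLL₁, hKZ₁] at h1
        exact hZ₁nA (fun x hx => (Finset.mem_inter.mp
          (h1 (Finset.mem_inter.mpr ⟨hAL₂ hx, hAL₁ hx⟩))).1)
      · -- K = Z₂
        rw [Finset.mem_singleton] at hK'
        have h1 : L₂ ∩ L ⊆ K ∩ L :=
          hcovΘ L₂ (Finset.mem_erase.mpr ⟨by rw [hLL₁]; exact hL₁₂.symm, hL₂Θ⟩)
        rw [hLL₁, hK'] at h1
        exact hZ₂nA (fun x hx => (Finset.mem_inter.mp
          (h1 (Finset.mem_inter.mpr ⟨hAL₂ hx, hAL₁ hx⟩))).1)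
    rcases Finset.mem_insert.mp hLΘ' with hLL₂ | hLΘ''
    · -- L = L₂
      rcases Finset.mem_insert.mp hKmem'.2 with hKL₁ | hK'
      · -- K = L₁ : Z₂ ∩ L₂ ⊆ L₁ ∩ L₂ ⊆ K₂ ∩ L₂, contradicting hZ₂bad
        refine hZ₂bad ?_
        have h1 : Z₂ ∩ L ⊆ K ∩ L :=
          hcovΘ Z₂ (Finset.mem_erase.mpr ⟨by rw [hLL₂]; exact hL₂Z₂.symm, hZ₂Θ⟩)
        rw [hLL₂, hKL₁] at h1
        exact h1.trans (hcov₂ L₁ (Finset.mem_erase.mpr ⟨hL₁₂, hL₁Γ⟩))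
      rcases Finset.mem_insert.mp hK' with hKL₂ | hK'
      · exact (hLL₂ ▸ hKmem'.1) hKL₂
      rcases Finset.mem_insert.mp hK' with hKZ₁ | hK'
      · have h1 : L₁ ∩ L ⊆ K ∩ L :=
          hcovΘ L₁ (Finset.mem_erase.mpr ⟨by rw [hLL₂]; exact hL₁₂, hL₁Θ⟩)
        rw [hLL₂, hKZ₁] at h1
        exact hZ₁nA (fun x hx => (Finset.mem_inter.mp
          (h1 (Finset.mem_inter.mpr ⟨hAL₁ hx, hAL₂ hx⟩))).1)
      · rw [Finset.mem_singleton] at hK'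
        have h1 : L₁ ∩ L ⊆ K ∩ L :=
          hcovΘ L₁ (Finset.mem_erase.mpr ⟨by rw [hLL₂]; exact hL₁₂, hL₁Θ⟩)
        rw [hLL₂, hK'] at h1
        exact hZ₂nA (fun x hx => (Finset.mem_inter.mp
          (h1 (Finset.mem_inter.mpr ⟨hAL₁ hx, hAL₂ hx⟩))).1)
    rcases Finset.mem_insert.mp hLΘ'' with hLZ₁ | hLΘ'''
    · -- L = Z₁
      rcases Finset.mem_insert.mp hKmem'.2 with hKL₁ | hK'
      · -- K = L₁ : Z₂ ∩ Z₁ ⊆ L₁ ∩ Z₁, contradicting hpoke₁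
        refine hpoke₁ ?_
        have h1 : Z₂ ∩ L ⊆ K ∩ L :=
          hcovΘ Z₂ (Finset.mem_erase.mpr ⟨by rw [hLZ₁]; exact hZ₁₂.symm, hZ₂Θ⟩)
        rw [hLZ₁, hKL₁] at h1
        exact h1
      rcases Finset.mem_insert.mp hK' with hKL₂ | hK'
      · -- K = L₂ : L₁ ∩ Z₁ ⊆ L₂ ∩ Z₁ forces Z₁ ∩ L₁ ⊆ K₁ ∩ L₁
        refine hZ₁bad ?_
        have h1 : L₁ ∩ L ⊆ K ∩ L :=
          hcovΘ L₁ (Finset.mem_erase.mpr ⟨by rw [hLZ₁]; exact hL₁Z₁, hL₁Θ⟩)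
        rw [hLZ₁, hKL₂] at h1
        intro x hx
        rw [Finset.mem_inter] at hx
        have hxL₂ : x ∈ L₂ := (Finset.mem_inter.mp
          (h1 (Finset.mem_inter.mpr ⟨hx.2, hx.1⟩))).1
        exact hcov₁ L₂ (Finset.mem_erase.mpr ⟨hL₁₂.symm, hL₂Γ⟩)
          (Finset.mem_inter.mpr ⟨hxL₂, hx.2⟩)
      rcases Finset.mem_insert.mp hK' with hKZ₁ | hK'
      · exact (hLZ₁ ▸ hKmem'.1) hKZ₁
      · -- K = Z₂ : L₁ ∩ Z₁ ⊆ Z₂ ∩ Z₁ forces Z₁ ∩ L₁ ⊆ K₁ ∩ L₁ via hcross₁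
        rw [Finset.mem_singleton] at hK'
        refine hZ₁bad ?_
        have h1 : L₁ ∩ L ⊆ K ∩ L :=
          hcovΘ L₁ (Finset.mem_erase.mpr ⟨by rw [hLZ₁]; exact hL₁Z₁, hL₁Θ⟩)
        rw [hLZ₁, hK'] at h1
        intro x hx
        rw [Finset.mem_inter] at hx
        have hxZ₂ : x ∈ Z₂ := (Finset.mem_inter.mp
          (h1 (Finset.mem_inter.mpr ⟨hx.2, hx.1⟩))).1
        exact hcross₁ (Finset.mem_inter.mpr ⟨hxZ₂, hx.2⟩)
    · -- L = Z₂
      rw [Finset.mem_singleton] at hLΘ'''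
      rcases Finset.mem_insert.mp hKmem'.2 with hKL₁ | hK'
      · -- K = L₁ : L₂ ∩ Z₂ ⊆ L₁ ∩ Z₂ forces Z₂ ∩ L₂ ⊆ K₂ ∩ L₂
        refine hZ₂bad ?_
        have h1 : L₂ ∩ L ⊆ K ∩ L :=
          hcovΘ L₂ (Finset.mem_erase.mpr ⟨by rw [hLΘ''']; exact hL₂Z₂, hL₂Θ⟩)
        rw [hLΘ''', hKL₁] at h1
        intro x hx
        rw [Finset.mem_inter] at hx
        have hxL₁ : x ∈ L₁ := (Finset.mem_inter.mp
          (h1 (Finset.mem_inter.mpr ⟨hx.2, hx.1⟩))).1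
        exact hcov₂ L₁ (Finset.mem_erase.mpr ⟨hL₁₂, hL₁Γ⟩)
          (Finset.mem_inter.mpr ⟨hxL₁, hx.2⟩)
      rcases Finset.mem_insert.mp hK' with hKL₂ | hK'
      · -- K = L₂ : Z₁ ∩ Z₂ ⊆ L₂ ∩ Z₂, contradicting hpoke₂
        refine hpoke₂ ?_
        have h1 : Z₁ ∩ L ⊆ K ∩ L :=
          hcovΘ Z₁ (Finset.mem_erase.mpr ⟨by rw [hLΘ''']; exact hZ₁₂, hZ₁Θ⟩)
        rw [hLΘ''', hKL₂] at h1
        exact h1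
      rcases Finset.mem_insert.mp hK' with hKZ₁ | hK'
      · -- K = Z₁ : L₂ ∩ Z₂ ⊆ Z₁ ∩ Z₂ forces Z₂ ∩ L₂ ⊆ K₂ ∩ L₂ via hcross₂
        refine hZ₂bad ?_
        have h1 : L₂ ∩ L ⊆ K ∩ L :=
          hcovΘ L₂ (Finset.mem_erase.mpr ⟨by rw [hLΘ''']; exact hL₂Z₂, hL₂Θ⟩)
        rw [hLΘ''', hKZ₁] at h1
        intro x hx
        rw [Finset.mem_inter] at hx
        have hxZ₁ : x ∈ Z₁ := (Finset.mem_inter.mp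
          (h1 (Finset.mem_inter.mpr ⟨hx.2, hx.1⟩))).1
        exact hcross₂ (Finset.mem_inter.mpr ⟨hxZ₁, hx.2⟩)
      · rw [Finset.mem_singleton] at hK'
        exact (hLΘ''' ▸ hKmem'.1) hK'
  · -- |D| ≥ 3 : contract a strong pair inside D and use the induction hypothesis
    have hD3 : 3 ≤ D.card := by omega
    -- the complex Δ minus H₀ has two leaves; at most one lies in the A-containing part
    set Ψ := Δ.erase H₀ with hΨdef
    have hΨss : Ψ ⊂ Δ :=
      ssubset_of_missing (Finset.erase_subset _ _) hH₀ (Finset.notMem_erase _ _)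
    have hΨcard : Ψ.card = Δ.card - 1 := Finset.card_erase_of_mem hH₀
    obtain ⟨R₁, hR₁Ψ, R₂, hR₂Ψ, hR₁₂, hRleaf₁, hRleaf₂⟩ :=
      two_leaves hmin (Δ.card - 1) Ψ hΨcard hΨss (by omega)
    have hΨ2 : 2 ≤ Ψ.card := by omega
    -- any leaf of Ψ is poked by H₀ above its joint
    have hpoke : ∀ R, IsLeaf Ψ R → ∀ Q ∈ Ψ.erase R, (∀ W ∈ Ψ.erase R, W ∩ R ⊆ Q ∩ R) →
        ¬ H₀ ∩ R ⊆ Q ∩ R := by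
      intro R hR Q hQ hQcov hbad
      have hRΔ : R ∈ Δ := Finset.mem_of_mem_erase hR.1
      have hQΔe : Q ∈ Δ.erase R := Finset.mem_erase.mpr
        ⟨(Finset.mem_erase.mp hQ).1,
         Finset.mem_of_mem_erase (Finset.mem_of_mem_erase hQ)⟩
      obtain ⟨Z, hZmem, hZbad⟩ := nofull hnoleaf hRΔ hQΔe
      by_cases hZH₀ : Z = H₀
      · rw [hZH₀] at hZbad; exact hZbad hbad
      · refine hZbad (hQcov Z ?_)
        rw [Finset.mem_erase] at hZmem ⊢
        exact ⟨hZmem.1, Finset.mem_erase.mpr ⟨hZH₀, hZmem.2⟩⟩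
    -- at most one of the two leaves contains A
    have honeA : ¬ (A ⊆ R₁ ∧ A ⊆ R₂) := by
      rintro ⟨hA₁, hA₂⟩
      obtain ⟨Q₁, hQ₁, hQ₁cov⟩ := exists_joint hRleaf₁ hΨ2
      obtain ⟨Q₂, hQ₂, hQ₂cov⟩ := exists_joint hRleaf₂ hΨ2
      have hR₁Δ : R₁ ∈ Δ := Finset.mem_of_mem_erase hR₁Ψ
      have hR₂Δ : R₂ ∈ Δ := Finset.mem_of_mem_erase hR₂Ψ
      rcases hchain R₁ hR₁Δ hA₁ R₂ hR₂Δ hA₂ hR₁₂ H₀ hH₀ hAH₀ with hc | hc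
      · refine hpoke R₁ hRleaf₁ Q₁ hQ₁ hQ₁cov ?_
        intro x hx
        rw [Finset.mem_inter] at hx
        have hxR₂ : x ∈ R₂ := (Finset.mem_inter.mp
          (hc (Finset.mem_inter.mpr ⟨hx.2, hx.1⟩))).1
        refine hQ₁cov R₂ (Finset.mem_erase.mpr ⟨hR₁₂.symm, hR₂Ψ⟩)
          (Finset.mem_inter.mpr ⟨hxR₂, hx.2⟩)
      · refine hpoke R₂ hRleaf₂ Q₂ hQ₂ hQ₂cov ?_
        intro x hx
        rw [Finset.mem_inter] at hx
        have hxR₁ : x ∈ R₁ := (Finset.mem_inter.mp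
          (hc (Finset.mem_inter.mpr ⟨hx.2, hx.1⟩))).1
        refine hQ₂cov R₁ (Finset.mem_erase.mpr ⟨hR₁₂, hR₁Ψ⟩)
          (Finset.mem_inter.mpr ⟨hxR₁, hx.2⟩)
    -- pick the leaf P not containing A
    have hPexists : ∃ P, IsLeaf Ψ P ∧ ¬ A ⊆ P := by
      by_cases h1 : A ⊆ R₁
      · by_cases h2 : A ⊆ R₂
        · exact absurd ⟨h1, h2⟩ honeA
        · exact ⟨R₂, hRleaf₂, h2⟩
      · exact ⟨R₁, hRleaf₁, h1⟩
    obtain ⟨P, hPleaf, hPnA⟩ := hPexists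
    have hPΨ : P ∈ Ψ := hPleaf.1
    have hPΔ : P ∈ Δ := Finset.mem_of_mem_erase hPΨ
    have hH₀P : H₀ ≠ P := fun h => (Finset.mem_erase.mp hPΨ).1 h.symm
    obtain ⟨Q, hQ, hQcov⟩ := exists_joint hPleaf hΨ2
    have hpokeP : ¬ H₀ ∩ P ⊆ Q ∩ P := hpoke P hPleaf Q hQ hQcov
    -- H₀ and P are strong neighbors
    have hstrongXP : ∀ W ∈ Δ, H₀ ∩ P ⊆ W → W = H₀ ∨ W = P := by
      intro W hW hsub
      by_contra hcon
      push_neg at hcon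
      have hWΨe : W ∈ Ψ.erase P := Finset.mem_erase.mpr
        ⟨hcon.2, Finset.mem_erase.mpr ⟨hcon.1, hW⟩⟩
      refine hpokeP ?_
      refine (Finset.subset_inter hsub Finset.inter_subset_right).trans ?_
      exact hQcov W hWΨe
    -- a third element of D , different from H₀ and P
    have hPD : P ∈ D := Finset.mem_filter.mpr ⟨hPΔ, hPnA⟩
    have hH₂exists : ∃ H₂, H₂ ∈ D ∧ H₂ ≠ H₀ ∧ H₂ ≠ P := by
      have hPD' : P ∈ D.erase H₀ := Finset.mem_erase.mpr ⟨fun h => hH₀P h.symm, hPD⟩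
      have hc2 : 1 ≤ ((D.erase H₀).erase P).card := by
        rw [Finset.card_erase_of_mem hPD', Finset.card_erase_of_mem hH₀D]
        omega
      obtain ⟨H₂, hH₂⟩ := Finset.card_pos.mp
        (show 0 < ((D.erase H₀).erase P).card by omega)
      rw [Finset.mem_erase] at hH₂
      exact ⟨H₂, (Finset.mem_erase.mp hH₂.2).2, (Finset.mem_erase.mp hH₂.2).1, hH₂.1⟩
    obtain ⟨H₂, hH₂D, hH₂H₀, hH₂P⟩ := hH₂exists
    have hH₂Δ : H₂ ∈ Δ := (Finset.mem_filter.mp hH₂D).1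
    have hH₂nA : ¬ A ⊆ H₂ := (Finset.mem_filter.mp hH₂D).2
    -- the contracted complex
    set μ := H₀ ∪ P with hμdef
    set Δ' := insert μ ((Δ.erase H₀).erase P) with hΔ'def
    have hμΔ : μ ∉ Δ := union_notMem hΔ hH₀ hPΔ hH₀P
    have hΔ'facet : IsFacetComplex Δ' :=
      contract_facetc hΔ hmin h4 hH₀ hPΔ hH₀P hstrongXP
    have hΔ'noleaf : ¬ ∃ L, IsLeaf Δ' L :=
      contract_noleaf hΔ hnoleaf hmin h4 hH₀ hPΔ hH₀P hstrongXP
    have hΔ'min : ∀ Γ' ⊂ Δ', Γ'.Nonempty → ∃ L, IsLeaf Γ' L :=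
      contract_min hΔ hmin hH₀ hPΔ hH₀P hstrongXP
    have hΔ'cyc : IsCycle Δ' := ⟨⟨μ, Finset.mem_insert_self _ _⟩, hΔ'noleaf, hΔ'min⟩
    have hΔ'card : Δ'.card = Δ.card - 1 := contract_card hH₀ hPΔ hH₀P hμΔ (by omega)
    -- memberships in Δ'
    have hmem' : ∀ {W : Finset V}, W ∈ Δ' ↔ W = μ ∨ (W ∈ Δ ∧ W ≠ H₀ ∧ W ≠ P) :=
      contract_mem_iff hμΔ
    have hFP : F ≠ P := fun h => hPnA (h ▸ hAF)
    have hGP : G ≠ P := fun h => hPnA (h ▸ hAG)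
    have hH₁P : H₁ ≠ P := fun h => hPnA (h ▸ hAH₁)
    have hFΔ' : F ∈ Δ' := hmem'.mpr (Or.inr ⟨hF, Ne.symm hH₀F, hFP⟩)
    have hGΔ' : G ∈ Δ' := hmem'.mpr (Or.inr ⟨hG, Ne.symm hH₀G, hGP⟩)
    have hH₁Δ' : H₁ ∈ Δ' := hmem'.mpr (Or.inr ⟨hH₁Δ, Ne.symm hH₀H₁, hH₁P⟩)
    have hH₂Δ' : H₂ ∈ Δ' := hmem'.mpr (Or.inr ⟨hH₂Δ, hH₂H₀, hH₂P⟩)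
    have hns' : ¬ StrongNeighbor Δ' F G := by
      intro hSN
      rcases hSN.2.2.2 H₁ hH₁Δ' hAH₁ with h | h
      · exact hH₁F h
      · exact hH₁G h
    have hIH := IH (Δ.card - 1) (by omega) Δ' (by rw [hΔ'card]) hΔ'facet hΔ'cyc
      F G hFΔ' hGΔ' hne hns' H₂ hH₂Δ'
    exact hH₂nA hIH
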